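/- Let G ⊆ k be a pseudomonoid with a weak order ⪯ (a translation-invariant linear order restricted from k). If G possesses a minimum element m, then either m = 0 or m is the unique negative element of G. Consequently, if G possesses both a minimum and a maximum element, then G has at most 3 elements. -/

import Mathlib

/-- Let `G ⊆ k` be a pseudomonoid with a weak order. If `G` has a minimum element
`m`, then `m = 0` or `m` is the unique negative element of `G`; and if `G` also has
a maximum element `M`, then `G ⊆ {m, 0, M}` (so `G` has at most 3 elements). -/
theorem stmt17 {k : Type} [Field k] [CharZero k]
    (r : k → k → Prop) (hlin : IsLinearOrder k r)
    (htrans : ∀ x y z : k, r x y → r (x + z) (y + z))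
    (G : Set k) (h0 : (0 : k) ∈ G)
    (hadd : ∀ a ∈ G, ∀ b ∈ G, a ≠ b → a + b ∈ G)
    (m : k) (hm : m ∈ G) (hmin : ∀ x ∈ G, r m x) :
    (m = 0 ∨ (m ≠ 0 ∧ ∀ x ∈ G, x ≠ 0 → r x 0 → x = m)) ∧
    (∀ M ∈ G, (∀ x ∈ G, r x M) → G ⊆ {m, 0, M}) := by
  have antisymm : ∀ a b : k, r a b → r b a → a = b := fun a b =>
    hlin.toIsPartialOrder.toAntisymm.antisymm a b
  have total : ∀ a b : k, r a b ∨ r b a := fun a b =>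
    hlin.toTotal.total a b
  -- key: any negative element equals m
  have key : ∀ x ∈ G, x ≠ 0 → r x 0 → x = m := by
    intro x hx hx0 hneg
    by_contra hxm
    have hmx : m + x ∈ G := hadd m hm x hx (fun h => hxm h.symm)
    have h1 : r (m + x) m := by
      have := htrans x 0 m hneg
      simpa [add_comm] using this
    have h2 : r m (m + x) := hmin _ hmx
    have : m + x = m := antisymm _ _ h1 h2
    exact hx0 (by have h := this; simpa using h)
  constructor
  · by_cases hm0 : m = 0
    · exact Or.inl hm0
    · exact Or.inr ⟨hm0, key⟩
  · intro M hM hmax g hg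
    by_contra hgn
    simp only [Set.mem_insert_iff, Set.mem_singleton_iff] at hgn
    push_neg at hgn
    obtain ⟨hgm, hg0, hgM⟩ := hgn
    rcases total g 0 with hneg | hpos
    · exact hgm (key g hg hg0 hneg)
    · have hgM' : g + M ∈ G := hadd g hg M hM hgM
      have h1 : r M (g + M) := by
        have := htrans 0 g M hpos
        simpa using this
      have h2 : r (g + M) M := hmax _ hgM'
      have : g + M = M := antisymm _ _ h2 h1
      exact hg0 (by have h := this; simpa using h)
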